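/- arXiv:1401.4626 — 2 statements merged into one kernel-verified Lean document; each statement's English description precedes it below -/
import Mathlib

section
/- Let φ: Γ' → Γ be a harmonic morphism of finite graphs. Then the total degree deg(φ), defined for any vertex p of Γ as the sum over vertices p' mapping to p of the local degrees d_{p'}(φ), is independent of the choice of the vertex p (assuming Γ is connected). -/
/-- For a harmonic morphism φ : Γ' → Γ of finite graphs (with positive
integer expansion factors on edges, and local degrees `locdeg`), if Γ is connected
then the total degree (the sum of local degrees over a fiber of vertices) is
independent of the chosen base vertex. Graphs are modeled with oriented edges via
their two endpoint maps `a`, `b`. -/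
theorem stmt_0
    {V E V' E' : Type} [Fintype V] [Fintype E] [Fintype V'] [Fintype E']
    [DecidableEq V] [DecidableEq E] [DecidableEq V'] [DecidableEq E']
    (a b : E → V) (a' b' : E' → V')
    (φV : V' → V) (φE : E' → E)
    (compat_a : ∀ e', a (φE e') = φV (a' e'))
    (compat_b : ∀ e', b (φE e') = φV (b' e'))
    (m : E' → ℕ) (hm : ∀ e', 0 < m e')
    (locdeg : V' → ℕ)
    -- harmonicity at every vertex: the sum of expansion factors over tangent
    -- directions above any fixed tangent direction at the image equals locdeg
    (harm : ∀ v' : V', ∀ f : E,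
      (a f = φV v' →
        ∑ e' ∈ Finset.univ.filter (fun e' => φE e' = f ∧ a' e' = v'), m e' = locdeg v') ∧
      (b f = φV v' →
        ∑ e' ∈ Finset.univ.filter (fun e' => φE e' = f ∧ b' e' = v'), m e' = locdeg v'))
    -- φ is surjective
    (hsurj : Function.Surjective φV)
    -- Γ is connected
    (hconn : ∀ v w : V,
      Relation.ReflTransGen (fun x y => ∃ f : E, (a f = x ∧ b f = y) ∨ (a f = y ∧ b f = x)) v w) :
    ∀ p q : V,
      ∑ v' ∈ Finset.univ.filter (fun v' => φV v' = p), locdeg v' =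
      ∑ v' ∈ Finset.univ.filter (fun v' => φV v' = q), locdeg v' := by

  -- Key step: for an edge f, the fiber sum at `a f` equals the total weight of
  -- edges above f, via harmonicity.
  have key : ∀ (f : E) (c : E → V) (c' : E' → V'),
      (∀ e', c (φE e') = φV (c' e')) →
      (∀ v' : V', c f = φV v' →
        ∑ e' ∈ Finset.univ.filter (fun e' => φE e' = f ∧ c' e' = v'), m e' = locdeg v') →
      ∑ v' ∈ Finset.univ.filter (fun v' => φV v' = c f), locdeg v' =
        ∑ e' ∈ Finset.univ.filter (fun e' => φE e' = f), m e' := by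
    intro f c c' hcompat hharm
    have := Finset.sum_fiberwise_of_maps_to
      (s := Finset.univ.filter (fun e' => φE e' = f))
      (t := Finset.univ.filter (fun v' => φV v' = c f))
      (g := c') (f := m) ?_
    · rw [← this]
      apply Finset.sum_congr rfl
      intro v' hv'
      simp only [Finset.mem_filter, Finset.mem_univ, true_and] at hv'
      rw [← hharm v' hv'.symm]
      congr 1
      ext e'
      simp [Finset.mem_filter, and_comm]
    · intro e' he'
      simp only [Finset.mem_filter, Finset.mem_univ, true_and] at he' ⊢
      rw [← hcompat, he']
  have step : ∀ f : E,
      ∑ v' ∈ Finset.univ.filter (fun v' => φV v' = a f), locdeg v' =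
      ∑ v' ∈ Finset.univ.filter (fun v' => φV v' = b f), locdeg v' := by
    intro f
    rw [key f a a' compat_a (fun v' h => (harm v' f).1 h),
        key f b b' compat_b (fun v' h => (harm v' f).2 h)]
  intro p q
  induction hconn p q with
  | refl => rfl
  | tail _ h ih =>
    obtain ⟨f, hf | hf⟩ := h
    · rw [ih, ← hf.1, ← hf.2, step f]
    · rw [ih, ← hf.1, ← hf.2, step f]
end

section
/- Let θ: G_src → G_tgt be a morphism of finite graphs mapping vertices to vertices and edges to edges (contracting no edges), equipped with positive integer expansion factors making it a combinatorial admissible cover. Let c: G_tgt → Ĝ_tgt be the contraction of a single edge e. Then contracting all edges of G_src mapping to e yields a graph Ĝ_src together with a well-defined induced morphism θ̂: Ĝ_src → Ĝ_tgt such that θ̂ ∘ (contraction on source) = c ∘ θ on vertices, and the expansion factors on edges of Ĝ_src agree with those of the corresponding edges of G_src. -/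
open scoped Classical

private lemma pair_quot_cases {V : Type} (x y : V) (u u' : V)
    (h : Quot.mk (fun v w : V => (x = v ∧ y = w) ∨ (x = w ∧ y = v)) u
       = Quot.mk (fun v w : V => (x = v ∧ y = w) ∨ (x = w ∧ y = v)) u') :
    u = u' ∨ ((u = x ∨ u = y) ∧ (u' = x ∨ u' = y)) := by
  have h' := Quot.eq.mp h
  clear h
  induction h' with
  | rel p q hpq => rcases hpq with ⟨h1, h2⟩ | ⟨h1, h2⟩ <;> exact Or.inr (by tauto)
  | refl p => exact Or.inl rfl
  | symm p q _ ih => tauto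
  | trans p q r _ _ ih1 ih2 =>
      rcases ih1 with rfl | ⟨h1, h2⟩
      · exact ih2
      · rcases ih2 with rfl | ⟨h3, h4⟩ <;> tauto

private lemma sum_subtype_filter_eq {E' : Type} [Fintype E'] (p : E' → Prop)
    (P : E' → Prop) (m : E' → ℕ) (hP : ∀ e', P e' → p e') :
    ∑ e' ∈ Finset.univ.filter (fun e' : {e' : E' // p e'} => P e'.val), m e'.val
      = ∑ e' ∈ Finset.univ.filter P, m e' := by
  refine Finset.sum_bij (fun x _ => x.val) ?_ ?_ ?_ ?_
  · intro x hx
    simp only [Finset.mem_filter, Finset.mem_univ, true_and] at hx ⊢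
    exact hx
  · intro x hx y hy hxy; exact Subtype.ext hxy
  · intro y hy
    have hPy : P y := (Finset.mem_filter.mp hy).2
    exact ⟨⟨y, hP y hPy⟩, by simp [hPy], rfl⟩
  · intro x hx; rfl

/-- Contracting a single edge e₀ of the target of a combinatorial
admissible cover θ : G_src → G_tgt (a surjective, harmonic graph morphism with
positive integer expansion factors m), and contracting all source edges lying over
e₀, yields an induced morphism θ̂ of the contracted graphs which commutes with the
contractions on vertices, maps the remaining edges compatibly with endpoints,
keeps the same expansion factors on the remaining edges, and is again harmonic.
Graphs are modeled by their two endpoint maps; contracted vertex sets are the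
quotients identifying the endpoints of the contracted edges. -/
theorem stmt_9
    {V E V' E' : Type} [Fintype V] [Fintype E] [Fintype V'] [Fintype E']
    [DecidableEq V] [DecidableEq E] [DecidableEq V'] [DecidableEq E']
    (a b : E → V) (a' b' : E' → V')
    (θV : V' → V) (θE : E' → E)
    (ca : ∀ e', a (θE e') = θV (a' e'))
    (cb : ∀ e', b (θE e') = θV (b' e'))
    (hsurjV : Function.Surjective θV) (hsurjE : Function.Surjective θE)
    (m : E' → ℕ) (hm : ∀ e', 0 < m e')
    (harm : ∀ v' : V', ∃ n : ℕ,
      (∀ f : E, a f = θV v' →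
        ∑ e' ∈ Finset.univ.filter (fun e' => θE e' = f ∧ a' e' = v'), m e' = n) ∧
      (∀ f : E, b f = θV v' →
        ∑ e' ∈ Finset.univ.filter (fun e' => θE e' = f ∧ b' e' = v'), m e' = n))
    (e₀ : E) :
    ∃ θhatV :
        Quot (fun v w : V' => ∃ e', θE e' = e₀ ∧
          ((a' e' = v ∧ b' e' = w) ∨ (a' e' = w ∧ b' e' = v))) →
        Quot (fun v w : V => (a e₀ = v ∧ b e₀ = w) ∨ (a e₀ = w ∧ b e₀ = v)),
      -- θ̂ commutes with the contraction maps on vertices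
      (∀ v' : V', θhatV (Quot.mk _ v') = Quot.mk _ (θV v')) ∧
      -- the remaining edges (those not over e₀) map with compatible endpoints,
      -- and their expansion factors are unchanged (the induced expansion factor
      -- of ehat is literally m ehat.val)
      (∀ ehat : {e' : E' // θE e' ≠ e₀},
        Quot.mk _ (a (θE ehat.val)) = θhatV (Quot.mk _ (a' ehat.val)) ∧
        Quot.mk _ (b (θE ehat.val)) = θhatV (Quot.mk _ (b' ehat.val))) ∧
      -- the contracted cover is again harmonic
      (∀ vhat : Quot (fun v w : V' => ∃ e', θE e' = e₀ ∧
          ((a' e' = v ∧ b' e' = w) ∨ (a' e' = w ∧ b' e' = v))), ∃ n : ℕ,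
        (∀ f : {f : E // f ≠ e₀}, Quot.mk _ (a f.val) = θhatV vhat →
          ∑ e' ∈ Finset.univ.filter (fun e' : {e' : E' // θE e' ≠ e₀} =>
              θE e'.val = f.val ∧ Quot.mk _ (a' e'.val) = vhat), m e'.val = n) ∧
        (∀ f : {f : E // f ≠ e₀}, Quot.mk _ (b f.val) = θhatV vhat →
          ∑ e' ∈ Finset.univ.filter (fun e' : {e' : E' // θE e' ≠ e₀} =>
              θE e'.val = f.val ∧ Quot.mk _ (b' e'.val) = vhat), m e'.val = n)) := by
  classical
  have hresp : ∀ v w : V', (∃ e', θE e' = e₀ ∧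
      ((a' e' = v ∧ b' e' = w) ∨ (a' e' = w ∧ b' e' = v))) →
      Quot.mk (fun v w : V => (a e₀ = v ∧ b e₀ = w) ∨ (a e₀ = w ∧ b e₀ = v)) (θV v)
        = Quot.mk (fun v w : V => (a e₀ = v ∧ b e₀ = w) ∨ (a e₀ = w ∧ b e₀ = v)) (θV w) := by
    rintro v w ⟨e', he, ⟨h1, h2⟩ | ⟨h1, h2⟩⟩
    · exact Quot.sound (Or.inl ⟨by rw [← h1, ← ca, he], by rw [← h2, ← cb, he]⟩)
    · exact Quot.sound (Or.inr ⟨by rw [← h1, ← ca, he], by rw [← h2, ← cb, he]⟩)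
  refine ⟨Quot.lift (fun v' => Quot.mk _ (θV v')) hresp, fun v' => rfl, ?_, ?_⟩
  · intro ehat
    exact ⟨congrArg (Quot.mk _) (ca ehat.val), congrArg (Quot.mk _) (cb ehat.val)⟩
  · intro vhat
    obtain ⟨v', rfl⟩ := Quot.exists_rep vhat
    choose N hNa hNb using harm
    set R' : V' → V' → Prop := fun v w => ∃ e', θE e' = e₀ ∧
      ((a' e' = v ∧ b' e' = w) ∨ (a' e' = w ∧ b' e' = v)) with hR'
    set B : V → Finset V' := fun u => Finset.univ.filter
      (fun w' => Quot.mk R' w' = Quot.mk R' v' ∧ θV w' = u) with hB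
    have memB : ∀ u w', w' ∈ B u ↔
        (Quot.mk R' w' = Quot.mk R' v' ∧ θV w' = u) := by
      intro u w'
      simp only [hB, Finset.mem_filter, Finset.mem_univ, true_and]
    have key_a : ∀ f : E, ∀ u : V, a f = u →
        ∑ e' ∈ Finset.univ.filter (fun e' : E' => θE e' = f ∧
            Quot.mk R' (a' e') = Quot.mk R' v'), m e'
          = ∑ w' ∈ B u, N w' := by
      intro f u hf
      have hmap : ∀ e' ∈ Finset.univ.filter (fun e' : E' => θE e' = f ∧
          Quot.mk R' (a' e') = Quot.mk R' v'), a' e' ∈ B u := by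
        intro e' he'
        simp only [Finset.mem_filter, Finset.mem_univ, true_and] at he'
        exact (memB u (a' e')).mpr ⟨he'.2, by rw [← ca, he'.1, hf]⟩
      rw [← Finset.sum_fiberwise_of_maps_to hmap m]
      refine Finset.sum_congr rfl fun w' hw' => ?_
      rw [memB] at hw'
      rw [Finset.filter_filter]
      have hfeq : Finset.univ.filter (fun e' : E' => (θE e' = f ∧
          Quot.mk R' (a' e') = Quot.mk R' v') ∧ a' e' = w')
        = Finset.univ.filter (fun e' : E' => θE e' = f ∧ a' e' = w') := by
        refine Finset.filter_congr fun e' _ => ?_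
        constructor
        · rintro ⟨⟨h1, _⟩, h3⟩; exact ⟨h1, h3⟩
        · rintro ⟨h1, h3⟩; exact ⟨⟨h1, by rw [h3, hw'.1]⟩, h3⟩
      rw [hfeq]
      exact hNa w' f (by rw [hf, ← hw'.2])
    have key_b : ∀ f : E, ∀ u : V, b f = u →
        ∑ e' ∈ Finset.univ.filter (fun e' : E' => θE e' = f ∧
            Quot.mk R' (b' e') = Quot.mk R' v'), m e'
          = ∑ w' ∈ B u, N w' := by
      intro f u hf
      have hmap : ∀ e' ∈ Finset.univ.filter (fun e' : E' => θE e' = f ∧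
          Quot.mk R' (b' e') = Quot.mk R' v'), b' e' ∈ B u := by
        intro e' he'
        simp only [Finset.mem_filter, Finset.mem_univ, true_and] at he'
        exact (memB u (b' e')).mpr ⟨he'.2, by rw [← cb, he'.1, hf]⟩
      rw [← Finset.sum_fiberwise_of_maps_to hmap m]
      refine Finset.sum_congr rfl fun w' hw' => ?_
      rw [memB] at hw'
      rw [Finset.filter_filter]
      have hfeq : Finset.univ.filter (fun e' : E' => (θE e' = f ∧
          Quot.mk R' (b' e') = Quot.mk R' v') ∧ b' e' = w')
        = Finset.univ.filter (fun e' : E' => θE e' = f ∧ b' e' = w') := by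
        refine Finset.filter_congr fun e' _ => ?_
        constructor
        · rintro ⟨⟨h1, _⟩, h3⟩; exact ⟨h1, h3⟩
        · rintro ⟨h1, h3⟩; exact ⟨⟨h1, by rw [h3, hw'.1]⟩, h3⟩
      rw [hfeq]
      exact hNb w' f (by rw [hf, ← hw'.2])
    have pairEq : ∀ e' : E', θE e' = e₀ → Quot.mk R' (a' e') = Quot.mk R' (b' e') :=
      fun e' he => Quot.sound ⟨e', he, Or.inl ⟨rfl, rfl⟩⟩
    have pairsum : ∑ w' ∈ B (a e₀), N w' = ∑ w' ∈ B (b e₀), N w' := by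
      rw [← key_a e₀ (a e₀) rfl, ← key_b e₀ (b e₀) rfl]
      refine Finset.sum_congr (Finset.filter_congr fun e' _ => ?_) (fun _ _ => rfl)
      constructor
      · rintro ⟨h1, h2⟩; exact ⟨h1, by rw [← pairEq e' h1]; exact h2⟩
      · rintro ⟨h1, h2⟩; exact ⟨h1, by rw [pairEq e' h1]; exact h2⟩
    have classEq : ∀ u : V,
        Quot.mk (fun v w : V => (a e₀ = v ∧ b e₀ = w) ∨ (a e₀ = w ∧ b e₀ = v)) u
          = Quot.mk (fun v w : V => (a e₀ = v ∧ b e₀ = w) ∨ (a e₀ = w ∧ b e₀ = v)) (θV v') →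
        ∑ w' ∈ B u, N w' = ∑ w' ∈ B (θV v'), N w' := by
      intro u hu
      rcases pair_quot_cases (a e₀) (b e₀) u (θV v') hu with rfl | ⟨h1, h2⟩
      · rfl
      · rcases h1 with rfl | rfl <;> rcases h2 with h2 | h2 <;> rw [h2]
        · exact pairsum
        · exact pairsum.symm
    refine ⟨∑ w' ∈ B (θV v'), N w', ?_, ?_⟩
    · intro f hf
      refine Eq.trans (Finset.sum_bij (fun (x : {e' : E' // θE e' ≠ e₀}) _ => x.val)
        ?_ ?_ ?_ ?_) (Eq.trans (key_a f.val (a f.val) rfl) (classEq (a f.val) hf))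
      · intro x hx
        simp only [Finset.mem_filter, Finset.mem_univ, true_and] at hx ⊢
        exact hx
      · intro x hx y hy hxy; exact Subtype.ext hxy
      · intro y hy
        simp only [Finset.mem_filter, Finset.mem_univ, true_and] at hy
        refine ⟨⟨y, by rw [hy.1]; exact f.2⟩, ?_, rfl⟩
        simp only [Finset.mem_filter, Finset.mem_univ, true_and]
        exact hy
      · intro x hx; rfl
    · intro f hf
      refine Eq.trans (Finset.sum_bij (fun (x : {e' : E' // θE e' ≠ e₀}) _ => x.val)
        ?_ ?_ ?_ ?_) (Eq.trans (key_b f.val (b f.val) rfl) (classEq (b f.val) hf))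
      · intro x hx
        simp only [Finset.mem_filter, Finset.mem_univ, true_and] at hx ⊢
        exact hx
      · intro x hx y hy hxy; exact Subtype.ext hxy
      · intro y hy
        simp only [Finset.mem_filter, Finset.mem_univ, true_and] at hy
        refine ⟨⟨y, by rw [hy.1]; exact f.2⟩, ?_, rfl⟩
        simp only [Finset.mem_filter, Finset.mem_univ, true_and]
        exact hy
      · intro x hx; rfl
end
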